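/- There exists n₀ such that for all n ≥ n₀ (with n a power of 4, n = 2^{2x}), setting k₁ = 4x and k₃ = √n, there exist sets U_1, ..., U_{2^{k₁}} ⊆ [k₃] such that: (1) log(n) ≤ |U_i| ≤ 21·log(n) for all i; (2) each element j ∈ [k₃] belongs to at most 22·2^{k₁}·log(n)/k₃ of the sets; (3) |U_{i₁} ∩ U_{i₂}| ≤ 10 for all i₁ ≠ i₂. -/

import Mathlib

lemma ineq16 : ∀ x : ℕ, 16 ≤ x → 16 * x ^ 2 ≤ 2 ^ x := by
  intro x hx
  induction x with
  | zero => omega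
  | succ y ih =>
    rcases Nat.lt_or_ge y 16 with h | h
    · have hy : y = 15 := by omega
      subst hy; norm_num
    · have h1 := ih h
      have h2 : 16 * (y + 1) ^ 2 ≤ 2 * (16 * y ^ 2) := by nlinarith
      calc 16 * (y + 1) ^ 2 ≤ 2 * (16 * y ^ 2) := h2
        _ ≤ 2 * 2 ^ y := by omega
        _ = 2 ^ (y + 1) := by ring

lemma ineq11 : ∀ x : ℕ, 16 ≤ x → (8 * x) ^ 11 ≤ 2 ^ (7 * x) := by
  intro x hx
  induction x with
  | zero => omega
  | succ y ih =>
    rcases Nat.lt_or_ge y 16 with h | h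
    · have hy : y = 15 := by omega
      subst hy
      norm_num
    · have h1 := ih h
      have key : (y + 1) ^ 11 ≤ 128 * y ^ 11 := by
        have h2 : (2 * (y + 1)) ^ 11 ≤ (3 * y) ^ 11 :=
          Nat.pow_le_pow_left (by omega) 11
        have h3 : (2 * (y + 1)) ^ 11 = 2048 * (y + 1) ^ 11 := by ring
        have h4 : (3 * y) ^ 11 = 177147 * y ^ 11 := by ring
        nlinarith [pow_nonneg (Nat.zero_le y) 11]
      have h5 : (8 * (y + 1)) ^ 11 ≤ 128 * (8 * y) ^ 11 := by
        have h6 : (8 * (y + 1)) ^ 11 = 8 ^ 11 * (y + 1) ^ 11 := by ring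
        have h7 : (8 * y) ^ 11 = 8 ^ 11 * y ^ 11 := by ring
        nlinarith
      calc (8 * (y + 1)) ^ 11 ≤ 128 * (8 * y) ^ 11 := h5
        _ ≤ 128 * 2 ^ (7 * y) := by omega
        _ = 2 ^ (7 * (y + 1)) := by
            rw [show 7 * (y + 1) = 7 * y + 7 by ring, pow_add]; ring

lemma digits_inj (p : ℕ) (hp : 0 < p) :
    ∀ k : ℕ, ∀ i i' : ℕ, i < p ^ k → i' < p ^ k →
      (∀ j < k, i / p ^ j % p = i' / p ^ j % p) → i = i' := by
  intro k
  induction k with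
  | zero => intro i i' hi hi' _; simp at hi hi'; omega
  | succ m ih =>
    intro i i' hi hi' h
    have h0 : i % p = i' % p := by simpa using h 0 (Nat.succ_pos m)
    have hd : i / p = i' / p := by
      apply ih
      · exact Nat.div_lt_of_lt_mul (by rw [← pow_succ'] ; exact hi)
      · exact Nat.div_lt_of_lt_mul (by rw [← pow_succ'] ; exact hi')
      · intro j hj
        have h1 := h (j + 1) (by omega)
        rwa [pow_succ', ← Nat.div_div_eq_div_mul, ← Nat.div_div_eq_div_mul] at h1
    have e1 := Nat.div_add_mod i p
    have e2 := Nat.div_add_mod i' p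
    rw [← e1, ← e2, hd, h0]

lemma encode_eq {p t t' v v' : ℕ} (hv : v < p) (hv' : v' < p)
    (h : t * p + v = t' * p + v') : t = t' ∧ v = v' := by
  have hp0 : 0 < p := by omega
  have ht : (t * p + v) / p = t := by
    rw [Nat.add_comm, Nat.add_mul_div_right _ _ hp0, Nat.div_eq_of_lt hv]; omega
  have ht' : (t' * p + v') / p = t' := by
    rw [Nat.add_comm, Nat.add_mul_div_right _ _ hp0, Nat.div_eq_of_lt hv']; omega
  have htt : t = t' := by rw [← ht, ← ht', h]
  constructor
  · exact htt
  · subst htt; omega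

open Polynomial in
lemma roots_bound {F : Type*} [Field F] [Fintype F] [DecidableEq F]
    {k : ℕ} (hk : 0 < k) (a b : Fin k → F) (hab : a ≠ b) :
    (Finset.univ.filter fun d : F => ∑ j, a j * d ^ (j : ℕ) = ∑ j, b j * d ^ (j : ℕ)).card
      ≤ k - 1 := by
  classical
  set f : F[X] := ∑ j : Fin k, C (a j - b j) * X ^ (j : ℕ) with hf
  have hcoeff : ∀ j : Fin k, f.coeff (j : ℕ) = a j - b j := by
    intro j
    rw [hf, Polynomial.finset_sum_coeff, Finset.sum_eq_single j]
    · rw [coeff_C_mul, coeff_X_pow, if_pos rfl, mul_one]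
    · intro j' _ hj'
      rw [coeff_C_mul, coeff_X_pow, if_neg (fun h => hj' (Fin.ext h).symm), mul_zero]
    · intro h; exact absurd (Finset.mem_univ j) h
  have hfne : f ≠ 0 := by
    obtain ⟨j, hj⟩ := Function.ne_iff.mp hab
    intro h0
    apply hj
    have := hcoeff j
    rw [h0, Polynomial.coeff_zero] at this
    exact sub_eq_zero.mp this.symm
  have hdeg : f.natDegree ≤ k - 1 := by
    apply Polynomial.natDegree_sum_le_of_forall_le
    intro j _
    exact le_trans (Polynomial.natDegree_C_mul_X_pow_le _ _) (by omega)
  calc (Finset.univ.filter fun d : F => ∑ j, a j * d ^ (j : ℕ) = ∑ j, b j * d ^ (j : ℕ)).card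
      ≤ f.roots.toFinset.card := by
        apply Finset.card_le_card
        intro d hd
        simp only [Finset.mem_filter] at hd
        rw [Multiset.mem_toFinset, Polynomial.mem_roots hfne]
        show f.eval d = 0
        rw [hf, Polynomial.eval_finset_sum]
        simp only [eval_mul, eval_C, eval_pow, eval_X, sub_mul]
        rw [Finset.sum_sub_distrib, hd.2, sub_self]
    _ ≤ Multiset.card f.roots := Multiset.toFinset_card_le _
    _ ≤ f.natDegree := Polynomial.card_roots' f
    _ ≤ k - 1 := hdeg

/-- evaluation of the degree-≤10 polynomial with coefficients `a` -/
def polyEval {p : ℕ} (a : Fin 11 → ZMod p) (d : ZMod p) : ZMod p :=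
  ∑ j : Fin 11, a j * d ^ (j : ℕ)

/-- base-`p` digits of `i`, as elements of `ZMod p` -/
def digs (p : ℕ) (i : ℕ) : Fin 11 → ZMod p :=
  fun j => ((i / p ^ (j : ℕ) % p : ℕ) : ZMod p)

set_option maxHeartbeats 1600000 in
/-- Existence of the set system for the non-downward-closed construction: for all
sufficiently large `n = 2^(2x)`, with `k₁ = 4x` and `k₃ = √n = 2^x`, there are sets
`U_1, …, U_{2^{k₁}} ⊆ [k₃]` with `log n ≤ |U_i| ≤ 21·log n`, each element in at most
`22·2^{k₁}·log(n)/k₃` of the sets, and pairwise intersections of size at most `10`. -/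
theorem stmt_9 : ∃ n₀ : ℕ, ∀ x n : ℕ, n₀ ≤ n → n = 2 ^ (2 * x) →
    ∃ U : Fin (2 ^ (4 * x)) → Finset (Fin (2 ^ x)),
      (∀ i, Real.logb 2 n ≤ ((U i).card : ℝ) ∧ ((U i).card : ℝ) ≤ 21 * Real.logb 2 n) ∧
      (∀ j : Fin (2 ^ x),
        ((Finset.univ.filter (fun i => j ∈ U i)).card : ℝ)
          ≤ 22 * 2 ^ (4 * x) * Real.logb 2 n / 2 ^ x) ∧
      (∀ i₁ i₂, i₁ ≠ i₂ → ((U i₁ ∩ U i₂).card : ℕ) ≤ 10) := by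
  classical
  refine ⟨2 ^ 32, ?_⟩
  intro x n hn hxn
  have hx : 16 ≤ x := by
    have h : (2:ℕ) ^ 32 ≤ 2 ^ (2 * x) := hxn ▸ hn
    have := (Nat.pow_le_pow_iff_right (by norm_num : (1:ℕ) < 2)).mp h
    omega
  have hlogb : Real.logb 2 (n : ℝ) = 2 * (x : ℝ) := by
    rw [hxn]
    push_cast
    rw [Real.logb_pow, Real.logb_self_eq_one (by norm_num)]
    push_cast; ring
  -- arithmetic facts about the prime p
  have h16 := ineq16 x hx
  have h11 := ineq11 x hx
  have hxpos : 0 < x := by omega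
  have h8x : 8 * x ≤ 2 ^ x := by nlinarith
  set m := 2 ^ x / (8 * x) with hm
  have hm0 : m ≠ 0 := by
    have : 1 ≤ m := (Nat.le_div_iff_mul_le (by omega)).mpr (by omega)
    omega
  obtain ⟨p, pp, hmp, hp2⟩ := Nat.exists_prime_lt_and_le_two_mul m hm0
  haveI : Fact p.Prime := ⟨pp⟩
  haveI : NeZero p := ⟨pp.pos.ne'⟩
  have hp0 : 0 < p := pp.pos
  have h2xm : 2 * x ≤ m := (Nat.le_div_iff_mul_le (by omega)).mpr (by nlinarith)
  have h2xp : 2 * x < p := lt_of_le_of_lt h2xm hmp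
  have hm8x : m * (8 * x) ≤ 2 ^ x := Nat.div_mul_le_self _ _
  have hsp : 2 * x * p ≤ 2 ^ x := by nlinarith
  have hlt8xp : 2 ^ x < 8 * x * p := by
    have hmod : 2 ^ x % (8 * x) < 8 * x := Nat.mod_lt _ (by omega)
    have hdm : 8 * x * m + 2 ^ x % (8 * x) = 2 ^ x := Nat.div_add_mod _ _
    calc 2 ^ x = 8 * x * m + 2 ^ x % (8 * x) := hdm.symm
      _ < 8 * x * m + 8 * x := by omega
      _ = 8 * x * (m + 1) := by ring
      _ ≤ 8 * x * p := Nat.mul_le_mul_left _ (by omega)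
  have hNp : 2 ^ (4 * x) < p ^ 11 := by
    have h1 : 2 ^ (11 * x) < (8 * x * p) ^ 11 := by
      calc 2 ^ (11 * x) = (2 ^ x) ^ 11 := by rw [← pow_mul]; congr 1; ring
        _ < (8 * x * p) ^ 11 := Nat.pow_lt_pow_left hlt8xp (by norm_num)
    have h4 : 2 ^ (7 * x) * 2 ^ (4 * x) < 2 ^ (7 * x) * p ^ 11 := by
      calc 2 ^ (7 * x) * 2 ^ (4 * x) = 2 ^ (11 * x) := by rw [← pow_add]; congr 1; ring
        _ < (8 * x) ^ 11 * p ^ 11 := by rw [← mul_pow]; exact h1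
        _ ≤ 2 ^ (7 * x) * p ^ 11 := Nat.mul_le_mul_right _ h11
    exact Nat.lt_of_mul_lt_mul_left h4
  set N := 2 ^ (4 * x) with hNdef
  -- the construction
  have hbound : ∀ (i : Fin N) (t : Fin (2 * x)),
      (t : ℕ) * p + (polyEval (digs p i) ((t : ℕ) : ZMod p)).val < 2 ^ x := by
    intro i t
    have h1 : (polyEval (digs p i) ((t : ℕ) : ZMod p)).val < p := ZMod.val_lt _
    have h2 : (t : ℕ) < 2 * x := t.isLt
    nlinarith
  set U : Fin N → Finset (Fin (2 ^ x)) := fun i =>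
    Finset.image (fun t : Fin (2 * x) =>
      (⟨(t : ℕ) * p + (polyEval (digs p i) ((t : ℕ) : ZMod p)).val, hbound i t⟩ : Fin (2 ^ x)))
      Finset.univ with hU
  have hcinj : ∀ i i' : Fin N, digs p i = digs p i' → i = i' := by
    intro i i' h
    apply Fin.ext
    apply digits_inj p hp0 11 _ _ (lt_trans i.isLt hNp) (lt_trans i'.isLt hNp)
    intro j hj
    have h1 := congrFun h ⟨j, hj⟩
    have hv := congrArg ZMod.val h1
    simp only [digs] at hv
    rwa [ZMod.val_natCast_of_lt (Nat.mod_lt _ hp0),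
      ZMod.val_natCast_of_lt (Nat.mod_lt _ hp0)] at hv
  have hcard : ∀ i, (U i).card = 2 * x := by
    intro i
    rw [hU]
    rw [Finset.card_image_of_injective _ ?_, Finset.card_univ, Fintype.card_fin]
    intro t t' h
    have h' := congrArg Fin.val h
    obtain ⟨h1, _⟩ := encode_eq (ZMod.val_lt _) (ZMod.val_lt _) h'
    exact Fin.ext h1
  refine ⟨U, ?_, ?_, ?_⟩
  · -- size bounds
    intro i
    rw [hlogb]
    constructor
    · rw [hcard i]; push_cast; linarith
    · rw [hcard i]; push_cast
      nlinarith [Nat.cast_nonneg (α := ℝ) x]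
  · -- degree bound
    intro j
    have hcount : (Finset.univ.filter (fun i : Fin N => j ∈ U i)).card ≤ N / p + 1 := by
      have : (Finset.univ.filter (fun i : Fin N => j ∈ U i)).card
          ≤ (Finset.range (N / p + 1)).card := by
        refine Finset.card_le_card_of_injOn (fun i => (i : ℕ) / p) ?_ ?_
        · intro i _
          refine Finset.mem_range.mpr ?_
          have h1 : (i : ℕ) / p ≤ N / p := Nat.div_le_div_right (le_of_lt i.isLt)
          show (i : ℕ) / p < N / p + 1
          omega
        · intro i hi i' hi' hdiv
          have hdiv' : (i : ℕ) / p = (i' : ℕ) / p := hdiv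
          simp only [Finset.coe_filter, Set.mem_setOf_eq, hU] at hi hi'
          obtain ⟨t₁, _, h1⟩ := Finset.mem_image.mp hi.2
          obtain ⟨t₂, _, h2⟩ := Finset.mem_image.mp hi'.2
          have h' := congrArg Fin.val (h1.trans h2.symm)
          obtain ⟨ht, hv⟩ := encode_eq (ZMod.val_lt _) (ZMod.val_lt _) h'
          have ht' : t₁ = t₂ := Fin.ext ht
          subst ht'
          have hE : polyEval (digs p i) ((t₁ : ℕ) : ZMod p)
              = polyEval (digs p i') ((t₁ : ℕ) : ZMod p) := ZMod.val_injective p hv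
          have hdig : ∀ jj : Fin 11, (jj : ℕ) ≠ 0 → digs p i jj = digs p i' jj := by
            intro jj hjj
            obtain ⟨kk, hkk⟩ : ∃ kk, (jj : ℕ) = kk + 1 := ⟨(jj : ℕ) - 1, by omega⟩
            simp only [digs, hkk, pow_succ', ← Nat.div_div_eq_div_mul]
            rw [hdiv']
          have hsplit : ∑ jj : Fin 11,
              (digs p i jj - digs p i' jj) * ((t₁ : ℕ) : ZMod p) ^ (jj : ℕ)
              = polyEval (digs p i) ((t₁ : ℕ) : ZMod p)
                - polyEval (digs p i') ((t₁ : ℕ) : ZMod p) := by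
            simp only [polyEval, sub_mul, Finset.sum_sub_distrib]
          have hsingle := Finset.sum_eq_single_of_mem (0 : Fin 11) (Finset.mem_univ _)
            (f := fun jj : Fin 11 =>
              (digs p i jj - digs p i' jj) * ((t₁ : ℕ) : ZMod p) ^ (jj : ℕ))
            (by
              intro jj _ hjj
              show (digs p (i : ℕ) jj - digs p (i' : ℕ) jj) * ((t₁ : ℕ) : ZMod p) ^ (jj : ℕ) = 0
              rw [hdig jj (fun h => hjj (Fin.ext h)), sub_self, zero_mul])
          rw [hsplit, hE, sub_self] at hsingle
          have h00 : digs p (i : ℕ) 0 = digs p (i' : ℕ) 0 := by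
            have h01 : (digs p (i : ℕ) 0 - digs p (i' : ℕ) 0)
                * ((t₁ : ℕ) : ZMod p) ^ ((0 : Fin 11) : ℕ) = 0 := hsingle.symm
            simpa [sub_eq_zero] using h01
          have hmodeq : (i : ℕ) % p = (i' : ℕ) % p := by
            have hv0 := congrArg ZMod.val h00
            simp only [digs, Fin.val_zero, pow_zero, Nat.div_one] at hv0
            rwa [ZMod.val_natCast_of_lt (Nat.mod_lt _ hp0),
              ZMod.val_natCast_of_lt (Nat.mod_lt _ hp0)] at hv0
          apply Fin.ext
          have e1 := Nat.div_add_mod (i : ℕ) p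
          have e2 := Nat.div_add_mod (i' : ℕ) p
          rw [← e1, ← e2, hdiv', hmodeq]
      simpa using this
    have hNdiv : N / p ≤ 8 * x * 2 ^ (3 * x) := by
      have hlt : N < (8 * x * 2 ^ (3 * x) + 1) * p := by
        have hN4 : N = 2 ^ (3 * x) * 2 ^ x := by rw [hNdef, ← pow_add]; congr 1; ring
        have hpow3 : 0 < 2 ^ (3 * x) := Nat.pow_pos (by norm_num)
        nlinarith
      have := (Nat.div_lt_iff_lt_mul hp0).mpr hlt
      omega
    have h1 : (Finset.univ.filter (fun i : Fin N => j ∈ U i)).card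
        ≤ 44 * x * 2 ^ (3 * x) := by
      have hx1 : 0 < x * 2 ^ (3 * x) :=
        Nat.mul_pos hxpos (Nat.pow_pos (by norm_num))
      calc (Finset.univ.filter (fun i : Fin N => j ∈ U i)).card
          ≤ N / p + 1 := hcount
        _ ≤ 8 * x * 2 ^ (3 * x) + 1 := by omega
        _ ≤ 44 * x * 2 ^ (3 * x) := by nlinarith
    rw [hlogb]
    have hRHS : (22 : ℝ) * 2 ^ (4 * x) * (2 * (x : ℝ)) / 2 ^ x
        = 44 * (x : ℝ) * 2 ^ (3 * x) := by
      rw [show 4 * x = 3 * x + x by ring, pow_add]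
      have hne : (2 : ℝ) ^ x ≠ 0 := by positivity
      field_simp
      ring
    rw [hRHS]
    exact_mod_cast h1
  · -- intersections
    intro i₁ i₂ hne
    have hcne : digs p i₁ ≠ digs p i₂ := fun h => hne (hcinj _ _ h)
    have hsub : U i₁ ∩ U i₂ ⊆ Finset.image (fun t : Fin (2 * x) =>
        (⟨(t : ℕ) * p + (polyEval (digs p i₁) ((t : ℕ) : ZMod p)).val,
          hbound i₁ t⟩ : Fin (2 ^ x)))
        (Finset.univ.filter fun t : Fin (2 * x) =>
          polyEval (digs p i₁) ((t : ℕ) : ZMod p)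
            = polyEval (digs p i₂) ((t : ℕ) : ZMod p)) := by
      intro e he
      rw [Finset.mem_inter, hU] at he
      obtain ⟨t₁, _, h1⟩ := Finset.mem_image.mp he.1
      obtain ⟨t₂, _, h2⟩ := Finset.mem_image.mp he.2
      have h' := congrArg Fin.val (h1.trans h2.symm)
      obtain ⟨ht, hv⟩ := encode_eq (ZMod.val_lt _) (ZMod.val_lt _) h'
      have ht' : t₁ = t₂ := Fin.ext ht
      subst ht'
      refine Finset.mem_image.mpr ⟨t₁, Finset.mem_filter.mpr ⟨Finset.mem_univ _, ?_⟩, h1⟩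
      exact ZMod.val_injective p hv
    calc (U i₁ ∩ U i₂).card
        ≤ _ := Finset.card_le_card hsub
      _ ≤ (Finset.univ.filter fun t : Fin (2 * x) =>
            polyEval (digs p i₁) ((t : ℕ) : ZMod p)
              = polyEval (digs p i₂) ((t : ℕ) : ZMod p)).card := Finset.card_image_le
      _ ≤ (Finset.univ.filter fun d : ZMod p =>
            polyEval (digs p i₁) d = polyEval (digs p i₂) d).card := by
          apply Finset.card_le_card_of_injOn (fun t : Fin (2 * x) => ((t : ℕ) : ZMod p))
          · intro t ht
            simp only [Finset.mem_filter] at *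
            exact Finset.mem_filter.mpr ⟨Finset.mem_univ _, by simpa using ht⟩
          · intro t _ t' _ hh
            have hvv := congrArg ZMod.val hh
            rw [ZMod.val_natCast_of_lt (lt_trans t.isLt h2xp),
              ZMod.val_natCast_of_lt (lt_trans t'.isLt h2xp)] at hvv
            exact Fin.ext hvv
      _ ≤ 10 := by
          have hb := roots_bound (k := 11) (by norm_num) (digs p i₁) (digs p i₂) hcne
          simp only [polyEval]; convert hb
          ext d
          exact ⟨fun h => Finset.mem_filter.mpr ⟨Finset.mem_univ _, (Finset.mem_filter.mp h).2⟩,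
            fun h => Finset.mem_filter.mpr ⟨Finset.mem_univ _, (Finset.mem_filter.mp h).2⟩⟩
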